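/- Let 1 < p < ∞, let D ⊂ ℝⁿ be a bounded open set with Lipschitz boundary, and let ρ ∈ ℝⁿ be a unit vector. Define h_D(ρ) = sup_{x ∈ D} x·ρ. Then there exist constants C > 0 and τ₀ > 0 such that for all τ ≥ τ₀, ∫_D exp(−pτ(h_D(ρ) − x·ρ)) dx ≥ C τ^{−n}. -/

import Mathlib

open MeasureTheory RealInnerProductSpace Filter Topology

/-- A bounded open set has Lipschitz boundary if near each boundary point, after
choosing a unit direction `v`, the set is the open region above the graph of a
Lipschitz function of the component orthogonal to `v`. -/
def HasLipschitzBoundary {n : ℕ} (D : Set (EuclideanSpace ℝ (Fin n))) : Prop :=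
  ∀ x ∈ frontier D, ∃ (v : EuclideanSpace ℝ (Fin n)) (U : Set (EuclideanSpace ℝ (Fin n)))
    (g : EuclideanSpace ℝ (Fin n) → ℝ) (K : NNReal),
      ‖v‖ = 1 ∧ IsOpen U ∧ x ∈ U ∧ LipschitzWith K g ∧
      ∀ y ∈ U, (y ∈ D ↔ g (y - (⟪y, v⟫ : ℝ) • v) < ⟪y, v⟫)

/-- The support function `h_D(ρ) = sup_{x ∈ D} x·ρ` of a set `D ⊆ ℝⁿ`. -/
noncomputable def supportFn {n : ℕ} (D : Set (EuclideanSpace ℝ (Fin n)))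
    (ρ : EuclideanSpace ℝ (Fin n)) : ℝ :=
  sSup ((fun x => (⟪x, ρ⟫ : ℝ)) '' D)

/-- Exponential concentration lower bound near the supporting hyperplane: for a bounded
open Lipschitz set `D` and a unit vector `ρ`,
`∫_D exp(−pτ(h_D(ρ) − x·ρ)) dx ≥ C τ^{−n}` for large `τ`. -/
theorem exp_concentration_lower_bound
    {n : ℕ} (p : ℝ) (hp : 1 < p)
    (D : Set (EuclideanSpace ℝ (Fin n))) (hDo : IsOpen D)
    (hDb : Bornology.IsBounded D) (hDne : D.Nonempty)
    (hDlip : HasLipschitzBoundary D)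
    (ρ : EuclideanSpace ℝ (Fin n)) (hρ : ‖ρ‖ = 1) :
    ∃ C > (0 : ℝ), ∃ τ₀ > (0 : ℝ), ∀ τ ≥ τ₀,
      C * τ ^ (-(n : ℝ)) ≤
        ∫ x in D, Real.exp (-(p * τ * (supportFn D ρ - ⟪x, ρ⟫))) := by
  classical
  have hp0 : (0:ℝ) < p := lt_trans one_pos hp
  set f : EuclideanSpace ℝ (Fin n) → ℝ := fun x => ⟪x, ρ⟫ with hfdef
  have hfc : Continuous f := continuous_id.inner continuous_const
  set h : ℝ := supportFn D ρ with hhdef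
  -- the image is bounded above
  obtain ⟨R, hR⟩ := hDb.subset_closedBall 0
  have hbdd : BddAbove (f '' D) := by
    refine ⟨R, ?_⟩
    rintro _ ⟨x, hx, rfl⟩
    calc f x ≤ ‖x‖ * ‖ρ‖ := real_inner_le_norm x ρ
    _ = ‖x‖ := by rw [hρ, mul_one]
    _ ≤ R := by simpa [Metric.mem_closedBall, dist_zero_right] using hR hx
  have hub : ∀ x ∈ D, f x ≤ h := fun x hx => le_csSup hbdd ⟨x, hx, rfl⟩
  -- a maximizer on the closure
  obtain ⟨z, hzcl, hzmax⟩ := hDb.isCompact_closure.exists_isMaxOn hDne.closure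
    hfc.continuousOn
  have hhz : h ≤ f z := csSup_le (hDne.image f)
    (by rintro _ ⟨x, hx, rfl⟩; exact hzmax (subset_closure hx))
  -- the maximizer is not in `D`
  have hzD : z ∉ D := by
    intro hzD
    obtain ⟨ε, hε, hball⟩ := Metric.isOpen_iff.1 hDo z hzD
    have hmem : z + (ε/2) • ρ ∈ D := by
      apply hball
      rw [Metric.mem_ball, dist_self_add_left, norm_smul, hρ, mul_one,
        Real.norm_eq_abs, abs_of_pos (half_pos hε)]
      linarith
    have heq : f (z + (ε/2) • ρ) = f z + ε/2 := by
      simp only [hfdef, inner_add_left, real_inner_smul_left,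
        real_inner_self_eq_norm_sq, hρ]
      ring
    have := hub _ hmem
    rw [heq] at this
    linarith
  have hzf : z ∈ frontier D := by
    rw [frontier, hDo.interior_eq]
    exact ⟨hzcl, hzD⟩
  obtain ⟨v, U, g, K, hv, hU, hzU, hg, hchar⟩ := hDlip z hzf
  obtain ⟨r₀, hr₀, hr₀U⟩ := Metric.isOpen_iff.1 hU z hzU
  -- boundary value of g at the maximizer
  have hgz : g (z - (⟪z, v⟫:ℝ) • v) ≤ ⟪z, v⟫ := by
    have hcls : z ∈ closure (D ∩ U) := by
      rw [mem_closure_iff]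
      intro o ho hzo
      rcases mem_closure_iff.1 hzcl (o ∩ U) (ho.inter hU) ⟨hzo, hzU⟩ with
        ⟨w, ⟨hwo, hwU⟩, hwD⟩
      exact ⟨w, hwo, hwD, hwU⟩
    have hset : closure (D ∩ U) ⊆ {y | g (y - (⟪y, v⟫:ℝ) • v) ≤ ⟪y, v⟫} := by
      apply closure_minimal
      · rintro y ⟨hyD, hyU⟩
        exact ((hchar y hyU).1 hyD).le
      · exact isClosed_le
          (hg.continuous.comp (continuous_id.sub
            (by fun_prop : Continuous fun y : EuclideanSpace ℝ (Fin n) => (⟪y, v⟫:ℝ) • v)))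
          (continuous_id.inner continuous_const)
    exact hset hcls
  -- the cone opening
  set δ : ℝ := 1/(2*((K:ℝ)+1)) with hδdef
  have hK0 : (0:ℝ) ≤ K := K.coe_nonneg
  have hδpos : 0 < δ := by rw [hδdef]; positivity
  have hδ1 : 2*(K:ℝ)*δ + 2*δ = 1 := by
    rw [hδdef]; field_simp
  have hδhalf : δ ≤ 1 := by nlinarith [mul_nonneg hK0 hδpos.le]
  -- balls in the cone are inside D
  have hball : ∀ s : ℝ, 0 < s → s ≤ r₀/2 →
      Metric.ball (z + s • v) (δ * s) ⊆ D := by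
    intro s hs hs2 x hx
    rw [Metric.mem_ball] at hx
    set u := x - (z + s • v) with hudef
    have hun : ‖u‖ < δ * s := by rwa [hudef, ← dist_eq_norm]
    have hx' : x = z + s • v + u := by rw [hudef]; abel
    have hxz : ‖x - z‖ < 2 * s := by
      have hxz' : x - z = u + s • v := by rw [hx']; abel
      calc ‖x - z‖ = ‖u + s • v‖ := by rw [hxz']
      _ ≤ ‖u‖ + ‖s • v‖ := norm_add_le _ _
      _ < δ*s + s := by
          rw [norm_smul, hv, mul_one, Real.norm_eq_abs, abs_of_pos hs]
          linarith
      _ ≤ 2*s := by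
          have h5 : δ * s ≤ 1 * s := mul_le_mul_of_nonneg_right hδhalf hs.le
          linarith
    have hxU : x ∈ U := hr₀U (by rw [Metric.mem_ball, dist_eq_norm]; linarith)
    refine (hchar x hxU).2 ?_
    have hxv : (⟪x, v⟫:ℝ) = ⟪z, v⟫ + s + ⟪u, v⟫ := by
      rw [hx']
      simp only [inner_add_left, real_inner_smul_left, real_inner_self_eq_norm_sq, hv]
      ring
    have hperp : x - (⟪x, v⟫:ℝ) • v
        = (z - (⟪z, v⟫:ℝ) • v) + (u - (⟪u, v⟫:ℝ) • v) := by
      rw [hxv, hx']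
      module
    have hwn : ‖u - (⟪u, v⟫:ℝ) • v‖ ≤ 2*‖u‖ := by
      calc ‖u - (⟪u, v⟫:ℝ) • v‖ ≤ ‖u‖ + ‖(⟪u, v⟫:ℝ) • v‖ := norm_sub_le _ _
      _ = ‖u‖ + |(⟪u, v⟫:ℝ)| := by rw [norm_smul, hv, mul_one, Real.norm_eq_abs]
      _ ≤ ‖u‖ + ‖u‖ := by
          have := abs_real_inner_le_norm u v
          rw [hv, mul_one] at this
          linarith
      _ = 2*‖u‖ := by ring
    have hgx : g (x - (⟪x, v⟫:ℝ) • v) ≤ g (z - (⟪z, v⟫:ℝ) • v) + K * (2*‖u‖) := by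
      have hd := hg.dist_le_mul (x - (⟪x, v⟫:ℝ) • v) (z - (⟪z, v⟫:ℝ) • v)
      have hdd : dist (x - (⟪x, v⟫:ℝ) • v) (z - (⟪z, v⟫:ℝ) • v) ≤ 2*‖u‖ := by
        rw [dist_eq_norm, hperp, add_sub_cancel_left]
        exact hwn
      have h1 : g (x - (⟪x, v⟫:ℝ) • v) - g (z - (⟪z, v⟫:ℝ) • v)
          ≤ dist (g (x - (⟪x, v⟫:ℝ) • v)) (g (z - (⟪z, v⟫:ℝ) • v)) := by
        rw [Real.dist_eq]; exact le_abs_self _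
      have h2 : (K:ℝ) * dist (x - (⟪x, v⟫:ℝ) • v) (z - (⟪z, v⟫:ℝ) • v)
          ≤ (K:ℝ) * (2*‖u‖) := by
        exact mul_le_mul_of_nonneg_left hdd hK0
      linarith
    have hiuv : -(δ*s) < (⟪u, v⟫:ℝ) := by
      have h1 := abs_real_inner_le_norm u v
      rw [hv, mul_one] at h1
      have := neg_abs_le (⟪u, v⟫:ℝ)
      linarith
    have hδ1s : 2*(K:ℝ)*(δ*s) + 2*(δ*s) = s := by
      rw [hδdef]; field_simp
    have hKu : (K:ℝ)*‖u‖ ≤ (K:ℝ)*(δ*s) := mul_le_mul_of_nonneg_left hun.le hK0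
    have hδs : 0 < δ * s := mul_pos hδpos hs
    linarith
  -- volume of the unit ball
  set ω : ℝ := (volume (Metric.ball (0:EuclideanSpace ℝ (Fin n)) 1)).toReal with hωdef
  have hωpos : 0 < ω := by
    rw [hωdef]
    exact ENNReal.toReal_pos (Metric.measure_ball_pos volume 0 one_pos).ne'
      measure_ball_lt_top.ne
  refine ⟨Real.exp (-(2*p)) * (δ^n * ω), by positivity, max (2/r₀) 1,
    lt_of_lt_of_le one_pos (le_max_right _ _), ?_⟩
  intro τ hτ
  have hτ1 : (1:ℝ) ≤ τ := le_trans (le_max_right _ _) hτ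
  have hτpos : (0:ℝ) < τ := lt_of_lt_of_le one_pos hτ1
  set s : ℝ := 1/τ with hsdef
  have hs : 0 < s := by rw [hsdef]; positivity
  have hs2 : s ≤ r₀/2 := by
    have h1 : 2/r₀ ≤ τ := le_trans (le_max_left _ _) hτ
    have h2 : (0:ℝ) < 2/r₀ := by positivity
    calc s = 1/τ := hsdef
    _ ≤ 1/(2/r₀) := one_div_le_one_div_of_le h2 h1
    _ = r₀/2 := one_div_div _ _
  set B := Metric.ball (z + s • v) (δ * s) with hBdef
  have hBD : B ⊆ D := hball s hs hs2
  set F : EuclideanSpace ℝ (Fin n) → ℝ :=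
    fun x => Real.exp (-(p * τ * (supportFn D ρ - ⟪x, ρ⟫))) with hFdef
  have hFc : Continuous F := by
    apply Real.continuous_exp.comp
    exact (continuous_const.mul ((continuous_const.sub hfc))).neg
  have hFpos : ∀ x, 0 < F x := fun x => Real.exp_pos _
  -- integrability on D
  have hFi : IntegrableOn F D := by
    apply Measure.integrableOn_of_bounded hDb.measure_lt_top.ne
      hFc.aestronglyMeasurable (M := 1)
    rw [ae_restrict_iff' hDo.measurableSet]
    filter_upwards with x hx
    rw [Real.norm_eq_abs, abs_of_pos (hFpos x), hFdef]
    apply Real.exp_le_one_iff.2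
    have h1 : f x ≤ h := hub x hx
    have h2 : (0:ℝ) ≤ p * τ := by positivity
    simp only [neg_nonpos]
    apply mul_nonneg h2
    rw [hhdef] at h1
    linarith
  -- pointwise lower bound on B
  have hpt : ∀ x ∈ B, Real.exp (-(2*p)) ≤ F x := by
    intro x hx
    rw [hFdef]
    apply Real.exp_le_exp.2
    rw [neg_le_neg_iff]
    have hxz : ‖x - z‖ ≤ 2 * s := by
      rw [hBdef, Metric.mem_ball, dist_eq_norm] at hx
      have h1 : ‖x - z‖ ≤ ‖x - (z + s • v)‖ + ‖s • v‖ := by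
        have : x - z = (x - (z + s • v)) + s • v := by abel
        rw [this]; exact norm_add_le _ _
      rw [norm_smul, hv, mul_one, Real.norm_eq_abs, abs_of_pos hs] at h1
      have h5 : δ * s ≤ 1 * s := mul_le_mul_of_nonneg_right hδhalf hs.le
      linarith
    have hhfx : h - f x ≤ 2 * s := by
      have h1 : h - f x ≤ f z - f x := by linarith
      have h2 : f z - f x = ⟪z - x, ρ⟫ := by
        simp [hfdef, inner_sub_left]
      have h3 : (⟪z - x, ρ⟫:ℝ) ≤ ‖z - x‖ := by
        have := real_inner_le_norm (z - x) ρ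
        rwa [hρ, mul_one] at this
      have h4 : ‖z - x‖ = ‖x - z‖ := norm_sub_rev _ _
      linarith
    have hts : τ * s = 1 := by
      rw [hsdef]; field_simp
    have : p * τ * (h - f x) ≤ p * τ * (2 * s) := by
      apply mul_le_mul_of_nonneg_left _ (by positivity)
      rw [hhdef] at hhfx ⊢
      exact hhfx
    calc p * τ * (supportFn D ρ - ⟪x, ρ⟫) ≤ p * τ * (2 * s) := this
    _ = 2 * p * (τ * s) := by ring
    _ = 2 * p := by rw [hts, mul_one]
  -- volume of B
  have hBvol : (volume B).toReal = (δ * s)^n * ω := by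
    rw [hBdef, Measure.addHaar_ball_of_pos volume _ (mul_pos hδpos hs),
      finrank_euclideanSpace_fin, ENNReal.toReal_mul,
      ENNReal.toReal_ofReal (by positivity), hωdef]
  have hτn : τ ^ (-(n:ℝ)) = s ^ n := by
    rw [Real.rpow_neg hτpos.le, Real.rpow_natCast, hsdef, one_div, inv_pow]
  calc Real.exp (-(2*p)) * (δ^n * ω) * τ ^ (-(n:ℝ))
      = Real.exp (-(2*p)) * ((δ * s)^n * ω) := by
        rw [hτn, mul_pow]; ring
    _ = Real.exp (-(2*p)) * (volume B).toReal := by rw [hBvol]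
    _ = ∫ _ in B, Real.exp (-(2*p)) := by
        rw [setIntegral_const, smul_eq_mul]; exact mul_comm _ _
    _ ≤ ∫ x in B, F x := by
        apply setIntegral_mono_on
          (integrableOn_const measure_ball_lt_top.ne)
          (hFi.mono_set hBD) measurableSet_ball
        intro x hx
        exact hpt x hx
    _ ≤ ∫ x in D, F x :=
        setIntegral_mono_set hFi
          (Filter.Eventually.of_forall fun x => (hFpos x).le)
          (HasSubset.Subset.eventuallyLE hBD)
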